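/- Two-filter representation of a smoothing functional: for every integer t with 2 ≤ t ≤ T − 1 and every measurable φ : E → [0,∞], one has ∫_{E^T} φ(x_t) ∏_{n=1}^T g_n(x_n) f_n(x_{n−1}, x_n) λ^{⊗T}(d(x_1,…,x_T)) = ∫_E ∫_E ∫_E γ_{t−1}(x_{t−1}) · γ̃_{t+1}(x_{t+1}) · φ(x_t) · g_t(x_t) · f_t(x_{t−1}, x_t) · f_{t+1}(x_t, x_{t+1}) / ξ_{t+1}(x_{t+1}) λ(dx_{t−1}) λ(dx_t) λ(dx_{t+1}), as an equality in [0,∞]. (The left-hand side is p(y_{1:T}) · E[φ(X_t) | y_{1:T}] whenever 0 < p(y_{1:T}) < ∞.) -/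

import Mathlib

open MeasureTheory ENNReal

/-- The joint density of a hidden Markov model path `x : Fin k → E`
(representing `x_1, …, x_k`, with initial point `x0`):
`∏_{n=1}^k g_n(x_n) f_n(x_{n-1}, x_n)`. -/
noncomputable def hmmDens {E : Type*} [MeasurableSpace E]
    (f : ℕ → E → E → ℝ≥0∞) (g : ℕ → E → ℝ≥0∞) (x0 : E)
    (k : ℕ) (x : Fin k → E) : ℝ≥0∞ :=
  ∏ i : Fin k,
    g ((i : ℕ) + 1) (x i) *
      f ((i : ℕ) + 1)
        (if _h : (i : ℕ) = 0 then x0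
          else x ⟨(i : ℕ) - 1, Nat.lt_of_le_of_lt (Nat.sub_le _ _) i.isLt⟩)
        (x i)

/-- The marginal likelihood `p(y_{1:T})`. -/
noncomputable def marginalLik {E : Type*} [MeasurableSpace E] (lam : Measure E)
    (f : ℕ → E → E → ℝ≥0∞) (g : ℕ → E → ℝ≥0∞) (x0 : E) (T : ℕ) : ℝ≥0∞ :=
  ∫⁻ x : Fin T → E, hmmDens f g x0 T x ∂(Measure.pi fun _ => lam)

/-- The forward unnormalized filter density `γ_n(x)`. -/
noncomputable def gammaFwd {E : Type*} [MeasurableSpace E] (lam : Measure E)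
    (f : ℕ → E → E → ℝ≥0∞) (g : ℕ → E → ℝ≥0∞) (x0 : E) (n : ℕ) (x : E) : ℝ≥0∞ :=
  ∫⁻ u : Fin (n - 1) → E,
    hmmDens f g x0 (n - 1) u *
      (g n x *
        f n
          (if h : n - 1 = 0 then x0
            else u ⟨n - 1 - 1, Nat.sub_lt (Nat.pos_of_ne_zero h) one_pos⟩)
          x) ∂(Measure.pi fun _ => lam)

/-- The density of the backward path segment `x_{n+1}, …, x_T` (as `v : Fin (T-n) → E`)
given `x_n = x`:  `∏_{p=n+1}^T g_p(x_p) f_p(x_{p-1}, x_p)`. -/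
noncomputable def hmmBwdDens {E : Type*} [MeasurableSpace E]
    (f : ℕ → E → E → ℝ≥0∞) (g : ℕ → E → ℝ≥0∞)
    (T n : ℕ) (x : E) (v : Fin (T - n) → E) : ℝ≥0∞ :=
  ∏ i : Fin (T - n),
    g (n + 1 + (i : ℕ)) (v i) *
      f (n + 1 + (i : ℕ))
        (if _h : (i : ℕ) = 0 then x
          else v ⟨(i : ℕ) - 1, Nat.lt_of_le_of_lt (Nat.sub_le _ _) i.isLt⟩)
        (v i)

/-- The backward unnormalized density `γ̃_n(x)`. -/
noncomputable def gammaBwd {E : Type*} [MeasurableSpace E] (lam : Measure E)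
    (f : ℕ → E → E → ℝ≥0∞) (g : ℕ → E → ℝ≥0∞) (ξ : ℕ → E → ℝ≥0∞)
    (T n : ℕ) (x : E) : ℝ≥0∞ :=
  ξ n x * g n x *
    ∫⁻ v : Fin (T - n) → E, hmmBwdDens f g T n x v ∂(Measure.pi fun _ => lam)


section Aux

variable {E : Type*} [MeasurableSpace E]

/-- Glue two finite paths into one of length `N = k + m`. -/
def glue {k m N : ℕ} (hN : N = k + m) (u : Fin k → E) (v : Fin m → E) (i : Fin N) : E :=
  if h : (i : ℕ) < k then u ⟨i, h⟩
  else v ⟨(i : ℕ) - k, by have := i.isLt; omega⟩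

lemma glue_lt {k m N : ℕ} (hN : N = k + m) (u : Fin k → E) (v : Fin m → E) {i : Fin N}
    (h : (i : ℕ) < k) : glue hN u v i = u ⟨i, h⟩ := dif_pos h

lemma glue_ge {k m N : ℕ} (hN : N = k + m) (u : Fin k → E) (v : Fin m → E) {i : Fin N}
    (h : ¬ (i : ℕ) < k) :
    glue hN u v i = v ⟨(i : ℕ) - k, by have := i.isLt; omega⟩ := dif_neg h

lemma measurable_glue {k m N : ℕ} (hN : N = k + m) :
    Measurable (fun p : (Fin k → E) × (Fin m → E) => glue hN p.1 p.2) := by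
  apply measurable_pi_lambda
  intro i
  unfold glue
  split_ifs with h
  · exact (measurable_pi_apply _).comp measurable_fst
  · exact (measurable_pi_apply _).comp measurable_snd

lemma lintegral_split (lam : Measure E) [SigmaFinite lam] {k m N : ℕ} (hN : N = k + m)
    (F : (Fin N → E) → ℝ≥0∞) (hF : Measurable F) :
    ∫⁻ x : Fin N → E, F x ∂(Measure.pi fun _ => lam) =
      ∫⁻ u : Fin k → E, ∫⁻ v : Fin m → E, F (glue hN u v)
        ∂(Measure.pi fun _ => lam) ∂(Measure.pi fun _ => lam) := by
  subst hN
  have h1 := measurePreserving_sumPiEquivProdPi_symm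
    (X := fun _ : Fin k ⊕ Fin m => E) (fun _ => lam)
  have h2 := measurePreserving_piCongrLeft (fun _ : Fin (k + m) => lam) finSumFinEquiv
  have h := h2.comp h1
  rw [← h.lintegral_comp hF, lintegral_prod _ ?hm]
  refine lintegral_congr fun u => lintegral_congr fun v => ?_
  congr 1
  funext i
  rcases lt_or_ge (i : ℕ) k with hi | hi
  · rw [glue_lt _ _ _ hi]
    have : i = finSumFinEquiv (Sum.inl ⟨(i : ℕ), hi⟩) := Fin.ext (by simp)
    conv_lhs => rw [this]
    simp only [Function.comp_apply, MeasurableEquiv.coe_piCongrLeft,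
      MeasurableEquiv.coe_sumPiEquivProdPi_symm]
    rw [Equiv.piCongrLeft_sumInl]
  · rw [glue_ge _ _ _ (not_lt.mpr hi)]
    have : i = finSumFinEquiv (Sum.inr ⟨(i : ℕ) - k, by have := i.isLt; omega⟩) :=
      Fin.ext (by simp; omega)
    conv_lhs => rw [this]
    simp only [Function.comp_apply, MeasurableEquiv.coe_piCongrLeft,
      MeasurableEquiv.coe_sumPiEquivProdPi_symm]
    rw [Equiv.piCongrLeft_sumInr]
  case hm => exact (hF.comp h.measurable).aemeasurable


/-- Backward product with explicit length. -/
noncomputable def prodBwd (f : ℕ → E → E → ℝ≥0∞) (g : ℕ → E → ℝ≥0∞)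
    (s m : ℕ) (x : E) (v : Fin m → E) : ℝ≥0∞ :=
  ∏ i : Fin m,
    g (s + 1 + (i : ℕ)) (v i) *
      f (s + 1 + (i : ℕ))
        (if _h : (i : ℕ) = 0 then x
          else v ⟨(i : ℕ) - 1, Nat.lt_of_le_of_lt (Nat.sub_le _ _) i.isLt⟩)
        (v i)

lemma hmmBwdDens_eq (f : ℕ → E → E → ℝ≥0∞) (g : ℕ → E → ℝ≥0∞) (T n : ℕ) (x : E) :
    hmmBwdDens f g T n x = prodBwd f g n (T - n) x := rfl

lemma lintegral_fin_congr (lam : Measure E) {m1 m2 : ℕ} (h : m1 = m2)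
    (F : ∀ m, (Fin m → E) → ℝ≥0∞) :
    (∫⁻ v : Fin m1 → E, F m1 v ∂(Measure.pi fun _ => lam)) =
      ∫⁻ v : Fin m2 → E, F m2 v ∂(Measure.pi fun _ => lam) := by subst h; rfl

variable {f : ℕ → E → E → ℝ≥0∞} {g : ℕ → E → ℝ≥0∞}

lemma measurable_hmmDens (hf : ∀ n, Measurable (fun p : E × E => f n p.1 p.2))
    (hg : ∀ n, Measurable (g n)) (x0 : E) (k : ℕ) :
    Measurable (hmmDens f g x0 k) := by
  unfold hmmDens
  refine Finset.measurable_prod _ fun i _ => Measurable.mul ?_ ?_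
  · exact (hg _).comp (measurable_pi_apply _)
  · split_ifs with h
    · have hp : Measurable (fun x : Fin k → E => (x0, x i)) :=
        measurable_const.prodMk (measurable_pi_apply _)
      exact (hf _).comp hp
    · have hp : Measurable (fun x : Fin k → E =>
          (x ⟨(i : ℕ) - 1, Nat.lt_of_le_of_lt (Nat.sub_le _ _) i.isLt⟩, x i)) :=
        (measurable_pi_apply _).prodMk (measurable_pi_apply _)
      exact (hf _).comp hp

lemma measurable_prodBwd (hf : ∀ n, Measurable (fun p : E × E => f n p.1 p.2))
    (hg : ∀ n, Measurable (g n)) (s m : ℕ) :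
    Measurable (fun p : E × (Fin m → E) => prodBwd f g s m p.1 p.2) := by
  unfold prodBwd
  refine Finset.measurable_prod _ fun i _ => Measurable.mul ?_ ?_
  · exact (hg _).comp ((measurable_pi_apply _).comp measurable_snd)
  · split_ifs with h
    · have hp : Measurable (fun p : E × (Fin m → E) => (p.1, p.2 i)) :=
        measurable_fst.prodMk ((measurable_pi_apply _).comp measurable_snd)
      exact (hf _).comp hp
    · have hp : Measurable (fun p : E × (Fin m → E) =>
          (p.2 ⟨(i : ℕ) - 1, Nat.lt_of_le_of_lt (Nat.sub_le _ _) i.isLt⟩, p.2 i)) :=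
        ((measurable_pi_apply _).comp measurable_snd).prodMk
          ((measurable_pi_apply _).comp measurable_snd)
      exact (hf _).comp hp

lemma hmmDens_glue (x0 : E) {k m N : ℕ} (hN : N = k + m) (u : Fin k → E) (v : Fin m → E) :
    hmmDens f g x0 N (glue hN u v) =
      hmmDens f g x0 k u *
        prodBwd f g k m (if h : k = 0 then x0 else u ⟨k - 1, by omega⟩) v := by
  subst hN
  unfold hmmDens prodBwd
  rw [Fin.prod_univ_add]
  congr 1
  · refine Finset.prod_congr rfl fun i _ => ?_
    have h1 : glue rfl u v (Fin.castAdd m i) = u i := by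
      rw [glue_lt _ _ _ (by simpa using i.isLt)]
      exact congrArg u (Fin.ext rfl)
    simp only [Fin.coe_castAdd, h1]
    congr 2
    by_cases hi : (i : ℕ) = 0
    · rw [dif_pos hi, dif_pos hi]
    · rw [dif_neg hi, dif_neg hi,
        glue_lt _ _ _ (show (i : ℕ) - 1 < k by have := i.isLt; omega)]
  · refine Finset.prod_congr rfl fun i _ => ?_
    have h1 : glue rfl u v (Fin.natAdd k i) = v i := by
      rw [glue_ge _ _ _ (by simp)]
      congr 1
      exact Fin.ext (by simp)
    simp only [Fin.coe_natAdd, h1]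
    rw [show k + (i : ℕ) + 1 = k + 1 + (i : ℕ) from by omega]
    congr 2
    by_cases hi : (i : ℕ) = 0
    · by_cases hk : k = 0
      · rw [dif_pos (by omega), dif_pos hi, dif_pos hk]
      · rw [dif_neg (by omega), dif_pos hi, dif_neg hk,
          glue_lt _ _ _ (show k + (i : ℕ) - 1 < k by omega)]
        congr 1
        exact Fin.ext (by simp; omega)
    · rw [dif_neg (by omega), dif_neg hi,
        glue_ge _ _ _ (show ¬ k + (i : ℕ) - 1 < k by omega)]
      congr 1
      exact Fin.ext (by simp; omega)

lemma lintegral_fin_one (lam : Measure E) [SigmaFinite lam]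
    (F : (Fin 1 → E) → ℝ≥0∞) (hF : Measurable F) :
    ∫⁻ v : Fin 1 → E, F v ∂(Measure.pi fun _ => lam) = ∫⁻ x, F (fun _ => x) ∂lam := by
  have hmp := measurePreserving_funUnique lam (Fin 1)
  have hG : Measurable (fun x : E => F (fun _ => x)) :=
    hF.comp (measurable_pi_lambda _ fun _ => measurable_id)
  calc ∫⁻ v : Fin 1 → E, F v ∂(Measure.pi fun _ => lam)
      = ∫⁻ v : Fin 1 → E, F (fun _ => (MeasurableEquiv.funUnique (Fin 1) E) v)
          ∂(Measure.pi fun _ => lam) := by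
        refine lintegral_congr fun v => ?_
        congr 1
        funext i
        rw [Subsingleton.elim i 0]
        rfl
    _ = ∫⁻ x, F (fun _ => x) ∂lam := hmp.lintegral_comp hG


lemma measurable_bwdInt (lam : Measure E) [SigmaFinite lam]
    (hf : ∀ n, Measurable (fun p : E × E => f n p.1 p.2))
    (hg : ∀ n, Measurable (g n)) (s m : ℕ) :
    Measurable (fun x : E => ∫⁻ v : Fin m → E, prodBwd f g s m x v
      ∂(Measure.pi fun _ => lam)) :=
  (measurable_prodBwd hf hg s m).lintegral_prod_right'

lemma gammaFwd_succ (lam : Measure E) [SigmaFinite lam] (x0 : E) (k : ℕ) (x : E) :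
    gammaFwd lam f g x0 (k + 1) x =
      ∫⁻ u : Fin k → E,
        hmmDens f g x0 k u *
          (g (k + 1) x * f (k + 1) (if h : k = 0 then x0 else u ⟨k - 1, by omega⟩) x)
        ∂(Measure.pi fun _ => lam) := rfl


lemma fwd_lemma (lam : Measure E) [SigmaFinite lam]
    (hf : ∀ n, Measurable (fun p : E × E => f n p.1 p.2)) (hg : ∀ n, Measurable (g n))
    (x0 : E) (k : ℕ) (C : E → ℝ≥0∞) (hC : Measurable C) :
    ∫⁻ w : Fin (k + 1) → E, hmmDens f g x0 (k + 1) w * C (w ⟨k, Nat.lt_succ_self k⟩)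
        ∂(Measure.pi fun _ => lam) =
      ∫⁻ x, gammaFwd lam f g x0 (k + 1) x * C x ∂lam := by
  have hFm : Measurable (fun w : Fin (k+1) → E =>
      hmmDens f g x0 (k+1) w * C (w ⟨k, Nat.lt_succ_self k⟩)) :=
    (measurable_hmmDens hf hg x0 (k+1)).mul (hC.comp (measurable_pi_apply _))
  rw [lintegral_split lam (rfl : k + 1 = k + 1) _ hFm]
  have hPm : Measurable (fun u : Fin k → E =>
      if h : k = 0 then x0 else u ⟨k - 1, by omega⟩) := by
    split_ifs with h; exacts [measurable_const, measurable_pi_apply _]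
  have step1 : ∀ u : Fin k → E,
      (∫⁻ y : Fin 1 → E, hmmDens f g x0 (k+1) (glue rfl u y) *
          C (glue rfl u y ⟨k, Nat.lt_succ_self k⟩) ∂(Measure.pi fun _ => lam)) =
      ∫⁻ x, hmmDens f g x0 k u *
        (g (k+1) x * f (k+1) (if h : k = 0 then x0 else u ⟨k - 1, by omega⟩) x) * C x ∂lam := by
    intro u
    rw [lintegral_fin_one lam (fun y => hmmDens f g x0 (k+1) (glue rfl u y) *
        C (glue rfl u y ⟨k, Nat.lt_succ_self k⟩)) ?hm1]
    case hm1 =>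
      exact hFm.comp ((measurable_glue rfl).comp (measurable_const.prodMk measurable_id))
    refine lintegral_congr fun x => ?_
    rw [hmmDens_glue x0 rfl u (fun _ => x),
      glue_ge rfl u (fun _ => x) (i := ⟨k, Nat.lt_succ_self k⟩) (by simp)]
    have hpb : prodBwd f g k 1 (if h : k = 0 then x0 else u ⟨k - 1, by omega⟩)
        (fun _ => x) = g (k+1) x *
          f (k+1) (if h : k = 0 then x0 else u ⟨k - 1, by omega⟩) x := by
      simp [prodBwd]
    rw [hpb]
  rw [lintegral_congr step1]
  rw [lintegral_lintegral_swap]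
  · refine lintegral_congr fun x => ?_
    rw [lintegral_mul_const _ (show Measurable (fun u : Fin k → E => hmmDens f g x0 k u *
        (g (k+1) x * f (k+1) (if h : k = 0 then x0 else u ⟨k - 1, by omega⟩) x)) from
      (measurable_hmmDens hf hg x0 k).mul
      ((measurable_const.mul ?_)))]
    · congr 1
    · have hp : Measurable (fun u : Fin k → E =>
          ((if h : k = 0 then x0 else u ⟨k - 1, by omega⟩), x)) :=
        hPm.prodMk measurable_const
      exact (hf _).comp hp
  · apply Measurable.aemeasurable
    have h1 : Measurable (fun p : (Fin k → E) × E => hmmDens f g x0 k p.1) :=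
      (measurable_hmmDens hf hg x0 k).comp measurable_fst
    have h2 : Measurable (fun p : (Fin k → E) × E => g (k+1) p.2) :=
      (hg _).comp measurable_snd
    have h3 : Measurable (fun p : (Fin k → E) × E =>
        f (k+1) (if h : k = 0 then x0 else p.1 ⟨k - 1, by omega⟩) p.2) := by
      have hp : Measurable (fun p : (Fin k → E) × E =>
          ((if h : k = 0 then x0 else p.1 ⟨k - 1, by omega⟩), p.2)) :=
        (hPm.comp measurable_fst).prodMk measurable_snd
      exact (hf _).comp hp
    have h4 : Measurable (fun p : (Fin k → E) × E => C p.2) := hC.comp measurable_snd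
    exact ((h1.mul (h2.mul h3)).mul h4)

end Aux

/-- **Two-filter representation of a smoothing functional**: for `2 ≤ t ≤ T - 1` and every
measurable `φ : E → [0,∞]`,
`∫ φ(x_t) ∏_{n=1}^T g_n(x_n) f_n(x_{n-1},x_n) λ^{⊗T}(dx_{1:T})
  = ∫∫∫ γ_{t-1}(x_{t-1}) γ̃_{t+1}(x_{t+1}) φ(x_t) g_t(x_t) f_t(x_{t-1},x_t)
     f_{t+1}(x_t,x_{t+1}) / ξ_{t+1}(x_{t+1}) λ(dx_{t-1}) λ(dx_t) λ(dx_{t+1})`. -/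
theorem two_filter_smoothing_functional
    {E : Type*} [MeasurableSpace E] (lam : Measure E) [SigmaFinite lam]
    (T : ℕ) (hT : 1 ≤ T) (x0 : E)
    (f : ℕ → E → E → ℝ≥0∞) (g : ℕ → E → ℝ≥0∞) (ξ : ℕ → E → ℝ≥0∞)
    (hf : ∀ n, Measurable (fun p : E × E => f n p.1 p.2))
    (hg : ∀ n, Measurable (g n)) (hξ : ∀ n, Measurable (ξ n))
    (hffin : ∀ n x x', f n x x' ≠ ∞) (hgfin : ∀ n x, g n x ≠ ∞)
    (hξpos : ∀ n x, 0 < ξ n x) (hξfin : ∀ n x, ξ n x ≠ ∞)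
    (t : ℕ) (ht : 2 ≤ t) (ht' : t ≤ T - 1)
    (φ : E → ℝ≥0∞) (hφ : Measurable φ) :
    (∫⁻ x : Fin T → E, φ (x ⟨t - 1, by omega⟩) * hmmDens f g x0 T x
        ∂(Measure.pi fun _ => lam)) =
      ∫⁻ xtm1, ∫⁻ xt, ∫⁻ xtp1,
        gammaFwd lam f g x0 (t - 1) xtm1 * gammaBwd lam f g ξ T (t + 1) xtp1 *
          φ xt * g t xt * f t xtm1 xt * f (t + 1) xt xtp1 / ξ (t + 1) xtp1 ∂lam ∂lam ∂lam := by
  -- set up arithmetic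
  obtain ⟨a, rfl⟩ : ∃ a, t = a + 2 := ⟨t - 2, by omega⟩
  obtain ⟨b, rfl⟩ : ∃ b, T = a + 3 + b := ⟨T - (a + 3), by omega⟩
  have pilam := (Measure.pi fun _ : Fin b => lam)
  simp only [show a + 2 - 1 = a + 1 from rfl, show a + 2 + 1 = a + 3 from rfl]
  -- the backward integral
  set B : E → ℝ≥0∞ := fun x => ∫⁻ v : Fin b → E, prodBwd f g (a+3) b x v
    ∂(Measure.pi fun _ => lam) with hB
  have hBm : Measurable B := measurable_bwdInt lam hf hg (a+3) b
  have hgb : ∀ x, gammaBwd lam f g ξ (a+3+b) (a+3) x = ξ (a+3) x * g (a+3) x * B x := by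
    intro x
    unfold gammaBwd
    rw [hmmBwdDens_eq]
    congr 1
    exact lintegral_fin_congr lam (by omega) (fun m v => prodBwd f g (a+3) m x v)
  -- the three-variable kernel
  set K : E → E → E → ℝ≥0∞ := fun xtm1 xt xtp1 =>
    φ xt * g (a+2) xt * f (a+2) xtm1 xt *
      (g (a+3) xtp1 * f (a+3) xt xtp1 * B xtp1) with hK
  have hK3 : ∀ xtm1 xt, Measurable (fun xtp1 => K xtm1 xt xtp1) := by
    intro xtm1 xt
    have hf1 : Measurable (fun xtp1 => f (a+3) xt xtp1) :=
      (hf _).comp (measurable_const.prodMk measurable_id)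
    exact measurable_const.mul (((hg _).mul hf1).mul hBm)
  have hKJ : Measurable (fun p : (E × E) × E => K p.1.1 p.1.2 p.2) := by
    have h1 : Measurable (fun p : (E × E) × E => φ p.1.2) :=
      hφ.comp (measurable_snd.comp measurable_fst)
    have h2 : Measurable (fun p : (E × E) × E => g (a+2) p.1.2) :=
      (hg _).comp (measurable_snd.comp measurable_fst)
    have h3 : Measurable (fun p : (E × E) × E => f (a+2) p.1.1 p.1.2) :=
      (hf _).comp ((measurable_fst.comp measurable_fst).prodMk
        (measurable_snd.comp measurable_fst))
    have h4 : Measurable (fun p : (E × E) × E => g (a+3) p.2) :=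
      (hg _).comp measurable_snd
    have h5 : Measurable (fun p : (E × E) × E => f (a+3) p.1.2 p.2) :=
      (hf _).comp ((measurable_snd.comp measurable_fst).prodMk measurable_snd)
    have h6 : Measurable (fun p : (E × E) × E => B p.2) := hBm.comp measurable_snd
    exact ((h1.mul h2).mul h3).mul ((h4.mul h5).mul h6)
  have hS : Measurable (fun q : E × E => ∫⁻ z, K q.1 q.2 z ∂lam) :=
    hKJ.lintegral_prod_right'
  set C : E → ℝ≥0∞ := fun xtm1 => ∫⁻ xt, ∫⁻ xtp1, K xtm1 xt xtp1 ∂lam ∂lam with hC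
  have hCm : Measurable C := hS.lintegral_prod_right'
  -- rewrite the RHS
  have hRHS : (∫⁻ xtm1, ∫⁻ xt, ∫⁻ xtp1,
      gammaFwd lam f g x0 (a+1) xtm1 * gammaBwd lam f g ξ (a+3+b) (a+3) xtp1 *
        φ xt * g (a+2) xt * f (a+2) xtm1 xt * f (a+3) xt xtp1 / ξ (a+3) xtp1
        ∂lam ∂lam ∂lam) =
      ∫⁻ xtm1, gammaFwd lam f g x0 (a+1) xtm1 * C xtm1 ∂lam := by
    refine lintegral_congr fun xtm1 => ?_
    have hpt : ∀ xt xtp1,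
        gammaFwd lam f g x0 (a+1) xtm1 * gammaBwd lam f g ξ (a+3+b) (a+3) xtp1 *
          φ xt * g (a+2) xt * f (a+2) xtm1 xt * f (a+3) xt xtp1 / ξ (a+3) xtp1 =
        gammaFwd lam f g x0 (a+1) xtm1 * K xtm1 xt xtp1 := by
      intro xt xtp1
      rw [hgb]
      rw [show gammaFwd lam f g x0 (a+1) xtm1 * (ξ (a+3) xtp1 * g (a+3) xtp1 * B xtp1) *
          φ xt * g (a+2) xt * f (a+2) xtm1 xt * f (a+3) xt xtp1 =
          gammaFwd lam f g x0 (a+1) xtm1 * K xtm1 xt xtp1 * ξ (a+3) xtp1 from by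
        rw [hK]; ring]
      exact ((ENNReal.eq_div_iff (hξpos _ _).ne' (hξfin _ _)).mpr (mul_comm _ _)).symm
    calc ∫⁻ xt, ∫⁻ xtp1,
        gammaFwd lam f g x0 (a+1) xtm1 * gammaBwd lam f g ξ (a+3+b) (a+3) xtp1 *
          φ xt * g (a+2) xt * f (a+2) xtm1 xt * f (a+3) xt xtp1 / ξ (a+3) xtp1 ∂lam ∂lam
        = ∫⁻ xt, ∫⁻ xtp1, gammaFwd lam f g x0 (a+1) xtm1 * K xtm1 xt xtp1 ∂lam ∂lam := by
          exact lintegral_congr fun xt => lintegral_congr fun xtp1 => hpt xt xtp1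
      _ = ∫⁻ xt, gammaFwd lam f g x0 (a+1) xtm1 * ∫⁻ xtp1, K xtm1 xt xtp1 ∂lam ∂lam := by
          exact lintegral_congr fun xt => lintegral_const_mul _ (hK3 xtm1 xt)
      _ = gammaFwd lam f g x0 (a+1) xtm1 * C xtm1 := by
          rw [hC]
          exact lintegral_const_mul _ (hS.comp (measurable_const.prodMk measurable_id))
  rw [hRHS, ← fwd_lemma lam hf hg x0 a C hCm]
  -- now transform the LHS
  have hsplit1 := lintegral_split lam (rfl : a+3+b = (a+3) + b)
    (fun x : Fin (a+3+b) → E => φ (x ⟨a+1, by omega⟩) * hmmDens f g x0 (a+3+b) x)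
    ((hφ.comp (measurable_pi_apply _)).mul (measurable_hmmDens hf hg x0 _))
  rw [hsplit1]
  -- inner integral over v
  have step1 : ∀ u : Fin (a+3) → E,
      (∫⁻ v : Fin b → E,
        φ ((glue rfl u v) ⟨a+1, by omega⟩) * hmmDens f g x0 (a+3+b) (glue rfl u v)
          ∂(Measure.pi fun _ => lam)) =
      φ (u ⟨a+1, by omega⟩) * hmmDens f g x0 (a+3) u * B (u ⟨a+2, by omega⟩) := by
    intro u
    have hptv : ∀ v : Fin b → E,
        φ ((glue rfl u v) ⟨a+1, by omega⟩) * hmmDens f g x0 (a+3+b) (glue rfl u v) =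
        φ (u ⟨a+1, by omega⟩) * hmmDens f g x0 (a+3) u *
          prodBwd f g (a+3) b (u ⟨a+2, by omega⟩) v := by
      intro v
      rw [hmmDens_glue x0 rfl u v, glue_lt rfl u v (show a+1 < a+3 by omega),
        dif_neg (show ¬ a+3 = 0 by omega)]
      simp only [show (a+3-1 : ℕ) = a + 2 from rfl]
      ring
    rw [lintegral_congr hptv]
    have hpbm : Measurable (fun v : Fin b → E => prodBwd f g (a+3) b (u ⟨a+2, by omega⟩) v) :=
      (measurable_prodBwd hf hg (a+3) b).comp (measurable_const.prodMk measurable_id)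
    rw [lintegral_const_mul _ hpbm]
  rw [lintegral_congr step1]
  -- second split : peel off x_{t+1}
  have h32 : a + 3 = (a + 2) + 1 := by omega
  have hG : Measurable (fun u : Fin (a+3) → E =>
      φ (u ⟨a+1, by omega⟩) * hmmDens f g x0 (a+3) u * B (u ⟨a+2, by omega⟩)) :=
    ((hφ.comp (measurable_pi_apply _)).mul (measurable_hmmDens hf hg x0 _)).mul
      (hBm.comp (measurable_pi_apply _))
  rw [lintegral_split lam h32 _ hG]
  have step2 : ∀ w : Fin (a+2) → E,
      (∫⁻ y : Fin 1 → E,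
        φ ((glue h32 w y) ⟨a+1, by omega⟩) * hmmDens f g x0 (a+3) (glue h32 w y) *
          B ((glue h32 w y) ⟨a+2, by omega⟩) ∂(Measure.pi fun _ => lam)) =
      ∫⁻ xtp1, φ (w ⟨a+1, by omega⟩) * hmmDens f g x0 (a+2) w *
        (g (a+3) xtp1 * f (a+3) (w ⟨a+1, by omega⟩) xtp1 * B xtp1) ∂lam := by
    intro w
    rw [lintegral_fin_one lam (fun y =>
        φ ((glue h32 w y) ⟨a+1, by omega⟩) * hmmDens f g x0 (a+3) (glue h32 w y) *
          B ((glue h32 w y) ⟨a+2, by omega⟩)) ?hm2]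
    case hm2 =>
      exact hG.comp ((measurable_glue h32).comp (measurable_const.prodMk measurable_id))
    refine lintegral_congr fun xtp1 => ?_
    rw [hmmDens_glue x0 h32 w (fun _ => xtp1),
      glue_lt h32 w _ (show ((⟨a+1, by omega⟩ : Fin (a+3)) : ℕ) < a + 2 by simp),
      glue_ge h32 w (fun _ => xtp1) (i := ⟨a+2, by omega⟩) (by simp),
      dif_neg (show ¬ a + 2 = 0 by omega)]
    have hpb : prodBwd f g (a+2) 1 (w ⟨a+2-1, by omega⟩) (fun _ => xtp1) =
        g (a+3) xtp1 * f (a+3) (w ⟨a+2-1, by omega⟩) xtp1 := by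
      simp [prodBwd, h32.symm]
    rw [hpb]
    simp only [show (a+2-1 : ℕ) = a+1 from rfl]
    ring
  rw [lintegral_congr step2]
  -- third split : peel off x_t
  have h21 : a + 2 = (a + 1) + 1 := by omega
  have hJ : Measurable (fun p : (Fin (a+2) → E) × E =>
      φ (p.1 ⟨a+1, by omega⟩) * hmmDens f g x0 (a+2) p.1 *
        (g (a+3) p.2 * f (a+3) (p.1 ⟨a+1, by omega⟩) p.2 * B p.2)) := by
    have h1 : Measurable (fun p : (Fin (a+2) → E) × E => φ (p.1 ⟨a+1, by omega⟩)) :=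
      hφ.comp ((measurable_pi_apply _).comp measurable_fst)
    have h2 : Measurable (fun p : (Fin (a+2) → E) × E => hmmDens f g x0 (a+2) p.1) :=
      (measurable_hmmDens hf hg x0 _).comp measurable_fst
    have h3 : Measurable (fun p : (Fin (a+2) → E) × E => g (a+3) p.2) :=
      (hg _).comp measurable_snd
    have hp4 : Measurable (fun p : (Fin (a+2) → E) × E =>
        (p.1 ⟨a+1, by omega⟩, p.2)) :=
      ((measurable_pi_apply _).comp measurable_fst).prodMk measurable_snd
    have h4 : Measurable (fun p : (Fin (a+2) → E) × E =>
        f (a+3) (p.1 ⟨a+1, by omega⟩) p.2) := (hf _).comp hp4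
    have h5 : Measurable (fun p : (Fin (a+2) → E) × E => B p.2) := hBm.comp measurable_snd
    exact (h1.mul h2).mul ((h3.mul h4).mul h5)
  have hH : Measurable (fun w : Fin (a+2) → E =>
      ∫⁻ xtp1, φ (w ⟨a+1, by omega⟩) * hmmDens f g x0 (a+2) w *
        (g (a+3) xtp1 * f (a+3) (w ⟨a+1, by omega⟩) xtp1 * B xtp1) ∂lam) :=
    hJ.lintegral_prod_right'
  rw [lintegral_split lam h21 _ hH]
  have step3 : ∀ w2 : Fin (a+1) → E,
      (∫⁻ y : Fin 1 → E,
        (∫⁻ xtp1, φ ((glue h21 w2 y) ⟨a+1, by omega⟩) *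
          hmmDens f g x0 (a+2) (glue h21 w2 y) *
          (g (a+3) xtp1 * f (a+3) ((glue h21 w2 y) ⟨a+1, by omega⟩) xtp1 * B xtp1) ∂lam)
        ∂(Measure.pi fun _ => lam)) =
      ∫⁻ xt, ∫⁻ xtp1,
        hmmDens f g x0 (a+1) w2 * K (w2 ⟨a, by omega⟩) xt xtp1 ∂lam ∂lam := by
    intro w2
    rw [lintegral_fin_one lam (fun y =>
        ∫⁻ xtp1, φ ((glue h21 w2 y) ⟨a+1, by omega⟩) *
          hmmDens f g x0 (a+2) (glue h21 w2 y) *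
          (g (a+3) xtp1 * f (a+3) ((glue h21 w2 y) ⟨a+1, by omega⟩) xtp1 * B xtp1) ∂lam) ?hm3]
    case hm3 =>
      exact hH.comp ((measurable_glue h21).comp (measurable_const.prodMk measurable_id))
    refine lintegral_congr fun xt => lintegral_congr fun xtp1 => ?_
    rw [hmmDens_glue x0 h21 w2 (fun _ => xt),
      glue_ge h21 w2 (fun _ => xt) (i := ⟨a+1, by omega⟩) (by simp),
      dif_neg (show ¬ a + 1 = 0 by omega)]
    have hpb : prodBwd f g (a+1) 1 (w2 ⟨a+1-1, by omega⟩) (fun _ => xt) =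
        g (a+2) xt * f (a+2) (w2 ⟨a+1-1, by omega⟩) xt := by
      simp [prodBwd, h21.symm]
    rw [hpb, hK]
    simp only [show (a+1-1 : ℕ) = a from rfl]
    ring
  rw [lintegral_congr step3]
  refine lintegral_congr fun w2 => ?_
  calc (∫⁻ xt, ∫⁻ xtp1,
        hmmDens f g x0 (a+1) w2 * K (w2 ⟨a, by omega⟩) xt xtp1 ∂lam ∂lam)
      = ∫⁻ xt, hmmDens f g x0 (a+1) w2 *
          ∫⁻ xtp1, K (w2 ⟨a, by omega⟩) xt xtp1 ∂lam ∂lam := by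
        exact lintegral_congr fun xt => lintegral_const_mul _ (hK3 _ _)
    _ = hmmDens f g x0 (a+1) w2 * C (w2 ⟨a, by omega⟩) := by
        rw [hC]
        exact lintegral_const_mul _ (hS.comp (measurable_const.prodMk measurable_id))
    _ = hmmDens f g x0 (a+1) w2 * C (w2 ⟨a, Nat.lt_succ_self a⟩) := rfl
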